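/- For n = (n¹, n², n³) ∈ ℝ³ \ {0}, let J_n : ℂ³ → ℂ³ be defined by J_n v = P_n(e₃ × (P_n v)), where P_n is the orthogonal projection onto {v : n·v = 0} and e₃ = (0,0,1). Then for every v ∈ ℂ³ with n · v = 0: J_n v = (n³/|n|) ((n/|n|) × v), and consequently J_n² v = −(n³/|n|)² v, so that exp(−Ω t J_n) v = cos(Ω t n³/|n|) v − sin(Ω t n³/|n|) ((n/|n|) × v) for all t, Ω ∈ ℝ. -/

import Mathlib

open scoped Classical

noncomputable section

abbrev V3 := Fin 3 → ℝ
abbrev C3 := Fin 3 → ℂ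

/-- Canonical inclusion of real vectors into `ℂ³`. -/
def toC (v : V3) : C3 := fun i => (v i : ℂ)

/-- Real dot product. -/
def dotR (u v : V3) : ℝ := ∑ i, u i * v i

/-- ℂ-bilinear dot product on `ℂ³`. -/
def dotC (u v : C3) : ℂ := ∑ i, u i * v i

/-- Euclidean norm of a vector of `ℝ³`. -/
def norm3 (v : V3) : ℝ := Real.sqrt (dotR v v)

/-- Cross product on `ℝ³`. -/
def crossR (u v : V3) : V3 :=
  ![u 1 * v 2 - u 2 * v 1, u 2 * v 0 - u 0 * v 2, u 0 * v 1 - u 1 * v 0]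

/-- ℂ-bilinear cross product on `ℂ³`. -/
def crossC (u v : C3) : C3 :=
  ![u 1 * v 2 - u 2 * v 1, u 2 * v 0 - u 0 * v 2, u 0 * v 1 - u 1 * v 0]

/-- Orthogonal projection of `ℂ³` onto `{v : m · v = 0}` (for a real frequency `m`). -/
def projC (m : V3) (v : C3) : C3 :=
  v - (dotC (toC m) v / ((dotR m m : ℝ) : ℂ)) • toC m

/-- Rodrigues rotation formula (unit axis `a`, cosine `c`, sine `s`). -/
def rodriguesR (a : V3) (c s : ℝ) (v : V3) : V3 :=
  c • v + s • crossR a v + ((1 - c) * dotR a v) • a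

/-- Complexified Rodrigues rotation formula; since the coefficients are real this acts on the
real and imaginary parts separately. -/
def rodriguesC (a : C3) (c s : ℂ) (v : C3) : C3 :=
  c • v + s • crossC a v + ((1 - c) * dotC a v) • a

/-- The rotation `R_{ω₁ ↦ ω₂}` around the axis `ω₁ × ω₂` by the angle `θ ∈ (0,π)` with
`cos θ = ω₁ · ω₂` (for unit vectors `ω₁ ≠ ±ω₂`, so that `sin θ = |ω₁ × ω₂|`). -/
def geoRot (ω₁ ω₂ : V3) (v : V3) : V3 :=
  rodriguesR ((norm3 (crossR ω₁ ω₂))⁻¹ • crossR ω₁ ω₂) (dotR ω₁ ω₂) (norm3 (crossR ω₁ ω₂)) v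

/-- The rotation `R_{ω₁ ↦ ω₂}` extended complex-linearly to `ℂ³`. -/
def geoRotC (ω₁ ω₂ : V3) (v : C3) : C3 :=
  rodriguesC (toC ((norm3 (crossR ω₁ ω₂))⁻¹ • crossR ω₁ ω₂)) ((dotR ω₁ ω₂ : ℝ) : ℂ)
    ((norm3 (crossR ω₁ ω₂) : ℝ) : ℂ) v

/-- Rotation around the unit axis `a` by the angle `α`, extended complex-linearly to `ℂ³`. -/
def axisRotC (a : V3) (α : ℝ) (v : C3) : C3 :=
  rodriguesC (toC a) ((Real.cos α : ℝ) : ℂ) ((Real.sin α : ℝ) : ℂ) v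

/-- `e∥(n) = e⊥ × (n/|n|)`. -/
def ePar (ePerp : V3) (n : V3) : V3 := crossR ePerp ((norm3 n)⁻¹ • n)

/-- Partial derivative of a real-valued function on `ℝ³`. -/
def pderivR (f : V3 → ℝ) (i : Fin 3) (x : V3) : ℝ := fderiv ℝ f x (Pi.single i 1)

/-- Partial derivative of a complex-valued function on `ℝ³`. -/
def pderivC (f : V3 → ℂ) (i : Fin 3) (x : V3) : ℂ := fderiv ℝ f x (Pi.single i 1)

/-- Curl of a real vector field on `ℝ³`. -/
def curlR (u : V3 → V3) (x : V3) : V3 :=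
  ![pderivR (fun y => u y 2) 1 x - pderivR (fun y => u y 1) 2 x,
    pderivR (fun y => u y 0) 2 x - pderivR (fun y => u y 2) 0 x,
    pderivR (fun y => u y 1) 0 x - pderivR (fun y => u y 0) 1 x]

/-- Curl of a complex vector field on `ℝ³`. -/
def curlC (u : V3 → C3) (x : V3) : C3 :=
  ![pderivC (fun y => u y 2) 1 x - pderivC (fun y => u y 1) 2 x,
    pderivC (fun y => u y 0) 2 x - pderivC (fun y => u y 2) 0 x,
    pderivC (fun y => u y 1) 0 x - pderivC (fun y => u y 0) 1 x]

/-- Real and imaginary parts of a complex vector, as real vectors. -/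
def reV (u : C3) : V3 := fun i => (u i).re
def imV (u : C3) : V3 := fun i => (u i).im

/-! ### Auxiliary lemmas -/

lemma aux_exp_mulVec_eigen (A : Matrix (Fin 3) (Fin 3) ℂ) (μ : ℂ) (p : C3)
    (h : A.mulVec p = μ • p) :
    (NormedSpace.exp A).mulVec p = NormedSpace.exp μ • p := by
  letI : NormedRing (Matrix (Fin 3) (Fin 3) ℂ) := Matrix.linftyOpNormedRing
  letI : NormedAlgebra ℂ (Matrix (Fin 3) (Fin 3) ℂ) := Matrix.linftyOpNormedAlgebra
  have hpow : ∀ k : ℕ, (A ^ k).mulVec p = (μ ^ k) • p := by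
    intro k
    induction k with
    | zero => simp [Matrix.one_mulVec]
    | succ k ih =>
      rw [pow_succ, ← Matrix.mulVec_mulVec, h, Matrix.mulVec_smul, ih,
        smul_smul, ← pow_succ']
  let f : Matrix (Fin 3) (Fin 3) ℂ →ₗ[ℂ] C3 :=
    { toFun := fun M => M.mulVec p
      map_add' := fun M N => Matrix.add_mulVec M N p
      map_smul' := fun c M => Matrix.smul_mulVec c M p }
  have hf : Continuous f := f.continuous_of_finiteDimensional
  have hsum : Summable fun k : ℕ => (Nat.factorial k : ℂ)⁻¹ • A ^ k :=
    NormedSpace.expSeries_summable' A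
  rw [NormedSpace.exp_eq_tsum (𝕂 := ℂ)]
  have hmap : (∑' k : ℕ, (Nat.factorial k : ℂ)⁻¹ • A ^ k).mulVec p
      = ∑' k : ℕ, f ((Nat.factorial k : ℂ)⁻¹ • A ^ k) :=
    (hsum.hasSum.map (⟨f, hf⟩ : Matrix (Fin 3) (Fin 3) ℂ →L[ℂ] C3)
      (by exact hf)).tsum_eq.symm
  rw [hmap]
  have : ∀ k : ℕ, f ((Nat.factorial k : ℂ)⁻¹ • A ^ k)
      = ((Nat.factorial k : ℂ)⁻¹ * μ ^ k) • p := by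
    intro k
    simp only [map_smul, f, LinearMap.coe_mk, AddHom.coe_mk, hpow, smul_smul]
  simp_rw [this]
  rw [Summable.tsum_smul_const (NormedSpace.expSeries_summable' (𝕂 := ℂ) μ |>.congr
    (by intro k; simp [smul_eq_mul])), NormedSpace.exp_eq_tsum (𝕂 := ℂ)]
  simp [smul_eq_mul]

lemma aux_dotR_pos (n : V3) (hn : n ≠ 0) : 0 < dotR n n := by
  obtain ⟨i, hi⟩ := Function.ne_iff.mp hn
  have hi' : n i ≠ 0 := by simpa using hi
  have : 0 < ∑ j, n j * n j :=
    Finset.sum_pos' (fun j _ => mul_self_nonneg _)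
      ⟨i, Finset.mem_univ i, mul_self_pos.mpr hi'⟩
  simpa [dotR] using this

lemma aux_key1 (n : V3) (hN : dotR n n ≠ 0) (v : C3)
    (h : (n 0 : ℂ) * v 0 + (n 1 : ℂ) * v 1 + (n 2 : ℂ) * v 2 = 0) :
    projC n (crossC (toC ![0, 0, 1]) v)
      = (((n 2 : ℝ) : ℂ) / ((dotR n n : ℝ) : ℂ)) • crossC (toC n) v := by
  have hNc : ((dotR n n : ℝ) : ℂ) ≠ 0 := Complex.ofReal_ne_zero.mpr hN
  have hd : ((dotR n n : ℝ) : ℂ) = (n 0 : ℂ) * n 0 + (n 1 : ℂ) * n 1 + (n 2 : ℂ) * n 2 := by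
    push_cast [dotR, Fin.sum_univ_three]; ring
  funext i
  fin_cases i
  · show (crossC (toC ![0,0,1]) v) 0 - _ * toC n 0 = _ * (crossC (toC n) v) 0
    simp [crossC, dotC, toC, Fin.sum_univ_three]
    field_simp
    rw [hd]
    linear_combination (-(n 1 : ℂ)) * h
  · show (crossC (toC ![0,0,1]) v) 1 - _ * toC n 1 = _ * (crossC (toC n) v) 1
    simp [crossC, dotC, toC, Fin.sum_univ_three]
    field_simp
    rw [hd]
    linear_combination ((n 0 : ℂ)) * h
  · show (crossC (toC ![0,0,1]) v) 2 - _ * toC n 2 = _ * (crossC (toC n) v) 2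
    simp [crossC, dotC, toC, Fin.sum_univ_three]
    field_simp
    linear_combination (0 : ℂ) * h

lemma aux_key_perp (n : V3) (v : C3) : dotC (toC n) (crossC (toC n) v) = 0 := by
  simp [dotC, crossC, toC, Fin.sum_univ_three]; ring

lemma aux_key2 (n : V3) (v : C3)
    (h : (n 0 : ℂ) * v 0 + (n 1 : ℂ) * v 1 + (n 2 : ℂ) * v 2 = 0) :
    crossC (toC n) (crossC (toC n) v) = (-((dotR n n : ℝ) : ℂ)) • v := by
  have hd : ((dotR n n : ℝ) : ℂ) = (n 0 : ℂ) * n 0 + (n 1 : ℂ) * n 1 + (n 2 : ℂ) * n 2 := by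
    push_cast [dotR, Fin.sum_univ_three]; ring
  funext i
  fin_cases i
  · show (crossC (toC n) (crossC (toC n) v)) 0 = (-((dotR n n : ℝ) : ℂ)) * v 0
    simp [crossC, toC, smul_eq_mul]
    rw [hd]
    linear_combination ((n 0 : ℂ)) * h
  · show (crossC (toC n) (crossC (toC n) v)) 1 = (-((dotR n n : ℝ) : ℂ)) * v 1
    simp [crossC, toC, smul_eq_mul]
    rw [hd]
    linear_combination ((n 1 : ℂ)) * h
  · show (crossC (toC n) (crossC (toC n) v)) 2 = (-((dotR n n : ℝ) : ℂ)) * v 2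
    simp [crossC, toC, smul_eq_mul]
    rw [hd]
    linear_combination ((n 2 : ℂ)) * h

lemma aux_cross_smul_left (c : ℝ) (n : V3) (v : C3) :
    crossC (toC (c • n)) v = (c : ℂ) • crossC (toC n) v := by
  funext i
  fin_cases i <;>
  · simp [crossC, toC]
    ring

/-- With `J_n v = P_n(e₃ × (P_n v))`, for every `v ⊥ n` one has
`J_n v = (n³/|n|)((n/|n|) × v)`, `J_n² v = −(n³/|n|)² v`, and hence
`exp(−Ω t J_n) v = cos(Ω t n³/|n|) v − sin(Ω t n³/|n|) ((n/|n|) × v)`. -/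
theorem coriolis_matrix_action
    (n : V3) (hn : n ≠ 0) (J : Matrix (Fin 3) (Fin 3) ℂ)
    (hJ : ∀ v : C3, J.mulVec v = projC n (crossC (toC ![0, 0, 1]) (projC n v))) :
    ∀ v : C3, dotC (toC n) v = 0 →
      J.mulVec v = ((n 2 / norm3 n : ℝ) : ℂ) • crossC (toC ((norm3 n)⁻¹ • n)) v ∧
      J.mulVec (J.mulVec v) = (-(((n 2 / norm3 n) ^ 2 : ℝ)) : ℂ) • v ∧
      ∀ t Ω : ℝ,
        (NormedSpace.exp ((-(Ω * t) : ℂ) • J)).mulVec v =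
          ((Real.cos (Ω * t * (n 2 / norm3 n)) : ℝ) : ℂ) • v -
          ((Real.sin (Ω * t * (n 2 / norm3 n)) : ℝ) : ℂ) • crossC (toC ((norm3 n)⁻¹ • n)) v := by
  
  intro v hv
  have hNpos : 0 < dotR n n := aux_dotR_pos n hn
  have hN : dotR n n ≠ 0 := ne_of_gt hNpos
  have hNc : ((dotR n n : ℝ) : ℂ) ≠ 0 := Complex.ofReal_ne_zero.mpr hN
  have hnorm_pos : 0 < norm3 n := Real.sqrt_pos.mpr hNpos
  have hnorm_ne : norm3 n ≠ 0 := ne_of_gt hnorm_pos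
  have hnorm_sq : norm3 n * norm3 n = dotR n n := Real.mul_self_sqrt hNpos.le
  have h' : (n 0 : ℂ) * v 0 + (n 1 : ℂ) * v 1 + (n 2 : ℂ) * v 2 = 0 := by
    simpa [dotC, toC, Fin.sum_univ_three] using hv
  have hproj : projC n v = v := by simp [projC, hv]
  -- the unnormalized cross product
  set w : C3 := crossC (toC n) v with hw
  -- the normalized cross product, as appears in the statement
  have hu : crossC (toC ((norm3 n)⁻¹ • n)) v = (((norm3 n)⁻¹ : ℝ) : ℂ) • w :=
    aux_cross_smul_left _ n v
  have hcoef : ((n 2 / norm3 n : ℝ) : ℂ) • crossC (toC ((norm3 n)⁻¹ • n)) v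
      = (((n 2 : ℝ) : ℂ) / ((dotR n n : ℝ) : ℂ)) • w := by
    rw [hu, smul_smul]
    congr 1
    have : (n 2 / norm3 n) * (norm3 n)⁻¹ = n 2 / dotR n n := by
      rw [← hnorm_sq]; field_simp
    exact_mod_cast congrArg Complex.ofReal this
  have h1' : J.mulVec v = (((n 2 : ℝ) : ℂ) / ((dotR n n : ℝ) : ℂ)) • w := by
    rw [hJ v, hproj, aux_key1 n hN v h']
  have h1 : J.mulVec v = ((n 2 / norm3 n : ℝ) : ℂ) • crossC (toC ((norm3 n)⁻¹ • n)) v :=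
    h1'.trans hcoef.symm
  -- action of J on w
  have hwperp : dotC (toC n) w = 0 := aux_key_perp n v
  have hw' : (n 0 : ℂ) * w 0 + (n 1 : ℂ) * w 1 + (n 2 : ℂ) * w 2 = 0 := by
    simpa [dotC, toC, Fin.sum_univ_three] using hwperp
  have hww : crossC (toC n) w = (-((dotR n n : ℝ) : ℂ)) • v := aux_key2 n v h'
  have hJw : J.mulVec w = (-((n 2 : ℝ) : ℂ)) • v := by
    rw [hJ w, (by simp [projC, hwperp] : projC n w = w), aux_key1 n hN w hw', hww,
      smul_smul]
    congr 1
    field_simp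
  -- part 2
  have h2 : J.mulVec (J.mulVec v) = (-(((n 2 / norm3 n) ^ 2 : ℝ)) : ℂ) • v := by
    rw [h1', Matrix.mulVec_smul, hJw, smul_smul]
    congr 1
    have : (n 2 / dotR n n) * (-(n 2)) = -((n 2 / norm3 n) ^ 2) := by
      rw [div_pow, ← hnorm_sq]
      field_simp
    have hC : ((norm3 n : ℝ) : ℂ) ≠ 0 := Complex.ofReal_ne_zero.mpr hnorm_ne
    have hsq : ((norm3 n : ℝ) : ℂ) * ((norm3 n : ℝ) : ℂ) = ((dotR n n : ℝ) : ℂ) := by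
      exact_mod_cast congrArg Complex.ofReal hnorm_sq
    push_cast
    rw [← hsq]
    field_simp [hC]
  refine ⟨h1, h2, ?_⟩
  -- part 3
  intro t Ω
  set μ : ℝ := n 2 / norm3 n with hμ
  set u : C3 := crossC (toC ((norm3 n)⁻¹ • n)) v with hudef
  have hJu : J.mulVec u = (-(μ : ℂ)) • v := by
    rw [hu, Matrix.mulVec_smul, hJw, smul_smul]
    congr 1
    have : (norm3 n)⁻¹ * (-(n 2)) = -μ := by
      rw [hμ]; field_simp
    exact_mod_cast congrArg Complex.ofReal this
  have hJv : J.mulVec v = (μ : ℂ) • u := h1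
  set p : C3 := v + Complex.I • u with hp
  set q : C3 := v - Complex.I • u with hq
  have hAp : ((-(Ω * t) : ℂ) • J).mulVec p = (((Ω * t * μ : ℝ) : ℂ) * Complex.I) • p := by
    rw [Matrix.smul_mulVec, hp, Matrix.mulVec_add, Matrix.mulVec_smul, hJv, hJu]
    funext i
    simp only [hp, Pi.smul_apply, Pi.add_apply, smul_eq_mul]
    push_cast
    linear_combination (-((Ω : ℂ) * t * μ) * u i) * Complex.I_sq
  have hAq : ((-(Ω * t) : ℂ) • J).mulVec q = (-((Ω * t * μ : ℝ) : ℂ) * Complex.I) • q := by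
    rw [Matrix.smul_mulVec, hq, Matrix.mulVec_sub, Matrix.mulVec_smul, hJv, hJu]
    funext i
    simp only [hq, Pi.smul_apply, Pi.add_apply, Pi.sub_apply, smul_eq_mul]
    push_cast
    linear_combination (-((Ω : ℂ) * t * μ) * u i) * Complex.I_sq
  have hep := aux_exp_mulVec_eigen _ _ _ hAp
  have heq := aux_exp_mulVec_eigen _ _ _ hAq
  have hv2 : v = (2⁻¹ : ℂ) • (p + q) := by
    funext i
    simp only [hp, hq, Pi.smul_apply, Pi.add_apply, Pi.sub_apply, smul_eq_mul]
    ring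
  rw [show (NormedSpace.exp ((-(Ω * t) : ℂ) • J)).mulVec v
      = (2⁻¹ : ℂ) • ((NormedSpace.exp ((-(Ω * t) : ℂ) • J)).mulVec p
        + (NormedSpace.exp ((-(Ω * t) : ℂ) • J)).mulVec q) by
    conv_lhs => rw [hv2]
    rw [Matrix.mulVec_smul, Matrix.mulVec_add]]
  rw [hep, heq]
  funext i
  simp only [hp, hq, Pi.smul_apply, Pi.add_apply, Pi.sub_apply, smul_eq_mul]
  rw [Complex.ofReal_cos, Complex.ofReal_sin, Complex.cos, Complex.sin,
    Complex.exp_eq_exp_ℂ]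
  ring
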